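/- Let q ≥ 2 and k ≥ 1 be integers, and let C = C_{2q+1} denote the cycle of length 2q+1. Then the k-clique blowup C^k of C satisfies χ(C^k) = ⌈((2q+1)/(2q))·ω(C^k)⌉; equivalently, since ω(C^k) = 2k, χ(C^k) = ⌈(2q+1)k/q⌉. -/

import Mathlib

open SimpleGraph

/-- The `t`-clique blowup `H^t` of a graph `H`: each vertex `v` of `H` is replaced by a
clique of size `t`, cliques of adjacent vertices are complete to each other and cliques
of distinct nonadjacent vertices are anticomplete. -/
def cliqueBlowupPow {α : Type} (H : SimpleGraph α) (t : ℕ) : SimpleGraph (α × Fin t) :=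
  SimpleGraph.fromRel (fun x y => x.1 = y.1 ∨ H.Adj x.1 y.1)

lemma blowup_adj {α : Type} (H : SimpleGraph α) (t : ℕ) (x y : α × Fin t) :
    (cliqueBlowupPow H t).Adj x y ↔ x ≠ y ∧ (x.1 = y.1 ∨ H.Adj x.1 y.1) := by
  rw [cliqueBlowupPow, fromRel_adj]
  constructor
  · rintro ⟨hne, h | h⟩
    · exact ⟨hne, h⟩
    · rcases h with h | h
      · exact ⟨hne, Or.inl h.symm⟩
      · exact ⟨hne, Or.inr h.symm⟩
  · rintro ⟨hne, h⟩
    exact ⟨hne, Or.inl h⟩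

/-- adjacency in the cycle graph, `ℕ`-level. -/
lemma cycle_adj_nat {q : ℕ} (hq : 2 ≤ q) (u v : Fin (2 * q + 1)) :
    (cycleGraph (2 * q + 1)).Adj u v ↔
      (v.val = u.val + 1 ∨ (u.val = 2 * q ∧ v.val = 0)) ∨
      (u.val = v.val + 1 ∨ (v.val = 2 * q ∧ u.val = 0)) := by
  rw [cycleGraph_adj']
  have key : ∀ a b : Fin (2 * q + 1), (b - a).val = 1 ↔
      (b.val = a.val + 1 ∨ (a.val = 2 * q ∧ b.val = 0)) := by
    intro a b
    have ha := a.isLt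
    have hb := b.isLt
    have hsub : (b - a).val = (2 * q + 1 - a.val + b.val) % (2 * q + 1) := by
      rw [Fin.sub_def]
    rw [hsub]
    rcases Nat.lt_or_ge (2 * q + 1 - a.val + b.val) (2 * q + 1) with hlt | hge
    · rw [Nat.mod_eq_of_lt hlt]; omega
    · have h2 : 2 * q + 1 - a.val + b.val - (2 * q + 1) < 2 * q + 1 := by omega
      rw [Nat.mod_eq_sub_mod hge, Nat.mod_eq_of_lt h2]
      omega
  rw [key u v, key v u]
  tauto

/-- any independent set in `C_{2q+1}` has at most `q` elements. -/
lemma indep_card_le {q : ℕ} (hq : 2 ≤ q) (S : Finset (Fin (2 * q + 1)))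
    (hS : ∀ i ∈ S, ∀ j ∈ S, ¬(cycleGraph (2 * q + 1)).Adj i j) : S.card ≤ q := by
  classical
  have hone : (1 : Fin (2 * q + 1)).val = 1 := by
    rw [Fin.val_one']
    exact Nat.mod_eq_of_lt (by omega)
  set T : Finset (Fin (2 * q + 1)) := S.image (· + 1) with hT
  have hcardT : T.card = S.card := Finset.card_image_of_injective _ (add_left_injective 1)
  have hdisj : Disjoint S T := by
    rw [Finset.disjoint_left]
    intro x hxS hxT
    rw [hT, Finset.mem_image] at hxT
    obtain ⟨y, hyS, rfl⟩ := hxT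
    refine hS y hyS (y + 1) hxS ?_
    rw [cycle_adj_nat hq]
    have : (y + 1 : Fin (2 * q + 1)).val = (y.val + 1) % (2 * q + 1) := by
      rw [Fin.add_def, hone]
    have hy := y.isLt
    rcases Nat.lt_or_ge (y.val + 1) (2 * q + 1) with hlt | hge
    · rw [Nat.mod_eq_of_lt hlt] at this; omega
    · have h0 : y.val + 1 = 2 * q + 1 := by omega
      rw [h0, Nat.mod_self] at this
      omega
  have := Finset.card_union_of_disjoint hdisj
  have hle : (S ∪ T).card ≤ 2 * q + 1 := by
    have := Finset.card_le_univ (S ∪ T)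
    simpa using this
  omega

lemma cycle_triangle_free {q : ℕ} (hq : 2 ≤ q) (i j l : Fin (2 * q + 1))
    (hij : (cycleGraph (2 * q + 1)).Adj i j) (hjl : (cycleGraph (2 * q + 1)).Adj j l)
    (hil : (cycleGraph (2 * q + 1)).Adj i l) : False := by
  rw [cycle_adj_nat hq] at hij hjl hil
  have h1 := i.isLt
  have h2 := j.isLt
  have h3 := l.isLt
  omega

lemma cliqueNum_eq {q k : ℕ} (hq : 2 ≤ q) (hk : 1 ≤ k) :
    (cliqueBlowupPow (cycleGraph (2 * q + 1)) k).cliqueNum = 2 * k := by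
  classical
  set G := cliqueBlowupPow (cycleGraph (2 * q + 1)) k with hG
  apply le_antisymm
  · -- upper bound
    obtain ⟨S, hS⟩ := G.exists_isNClique_cliqueNum
    rw [← hS.card_eq]
    have himg : (S.image Prod.fst).card ≤ 2 := by
      by_contra h
      push_neg at h
      obtain ⟨u, hu, hu3⟩ := Finset.exists_subset_card_eq (s := S.image Prod.fst) (n := 3) h
      rw [Finset.card_eq_three] at hu3
      obtain ⟨a, b, c, hab, hac, hbc, rfl⟩ := hu3
      have adj : ∀ x y : Fin (2 * q + 1), x ∈ S.image Prod.fst → y ∈ S.image Prod.fst →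
          x ≠ y → (cycleGraph (2 * q + 1)).Adj x y := by
        intro x y hx hy hxy
        rw [Finset.mem_image] at hx hy
        obtain ⟨p, hp, rfl⟩ := hx
        obtain ⟨r, hr, rfl⟩ := hy
        have hpr : p ≠ r := fun h => hxy (by rw [h])
        have := hS.isClique hp hr hpr
        rw [hG, blowup_adj] at this
        exact this.2.resolve_left hxy
      have ha : a ∈ S.image Prod.fst := hu (by simp)
      have hb : b ∈ S.image Prod.fst := hu (by simp)
      have hc : c ∈ S.image Prod.fst := hu (by simp)
      exact cycle_triangle_free hq a b c (adj a b ha hb hab) (adj b c hb hc hbc)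
        (adj a c ha hc hac)
    calc S.card ≤ k * (S.image Prod.fst).card := by
          apply Finset.card_le_mul_card_image
          intro b hb
          refine le_trans (Finset.card_le_card_of_injOn Prod.snd
            (fun a _ => Finset.mem_univ _) ?_) (by simp)
          intro x hx y hy hxy
          simp only [Finset.mem_coe, Finset.mem_filter] at hx hy
          exact Prod.ext (hx.2.trans hy.2.symm) hxy
      _ ≤ k * 2 := Nat.mul_le_mul_left k himg
      _ = 2 * k := by ring
  · -- lower bound : explicit 2k-clique
    have h01 : (0 : Fin (2 * q + 1)) ≠ 1 := by
      rw [Fin.ne_iff_vne]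
      simp [Fin.val_one']
      omega
    have hclique : G.IsClique
        (↑((({0, 1} : Finset (Fin (2 * q + 1)))) ×ˢ (Finset.univ : Finset (Fin k))) :
          Set (Fin (2 * q + 1) × Fin k)) := by
      intro x hx y hy hne
      rw [Finset.mem_coe, Finset.mem_product] at hx hy
      simp only [Finset.mem_insert, Finset.mem_singleton] at hx hy
      rw [hG, blowup_adj]
      refine ⟨hne, ?_⟩
      by_cases hfst : x.1 = y.1
      · exact Or.inl hfst
      · refine Or.inr ?_
        rw [cycle_adj_nat hq]
        have h0 : (0 : Fin (2 * q + 1)).val = 0 := rfl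
        have h1 : (1 : Fin (2 * q + 1)).val = 1 := by
          rw [Fin.val_one']; exact Nat.mod_eq_of_lt (by omega)
        rcases hx.1 with hx1 | hx1 <;> rcases hy.1 with hy1 | hy1
        · exact absurd (hx1.trans hy1.symm) hfst
        · rw [hx1, hy1]; omega
        · rw [hx1, hy1]; omega
        · exact absurd (hx1.trans hy1.symm) hfst
    have hcard : (({0, 1} : Finset (Fin (2 * q + 1))) ×ˢ
        (Finset.univ : Finset (Fin k))).card = 2 * k := by
      rw [Finset.card_product, Finset.card_pair h01]
      simp
    rw [← hcard]
    exact IsClique.card_le_cliqueNum (tc := hclique)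

lemma blowup_colorable {q k : ℕ} (hq : 2 ≤ q) (hk : 1 ≤ k) :
    (cliqueBlowupPow (cycleGraph (2 * q + 1)) k).Colorable ⌈((2 * q + 1 : ℚ)) * k / q⌉₊ := by
  classical
  set m : ℕ := ⌈((2 * q + 1 : ℚ)) * k / q⌉₊ with hm
  have hq0 : (0 : ℚ) < q := by positivity
  -- fact 1 : (2q+1)k ≤ qm
  have fact1 : (2 * q + 1) * k ≤ q * m := by
    have h := Nat.le_ceil ((2 * q + 1 : ℚ) * k / q)
    rw [div_le_iff₀ hq0] at h
    have : ((2 * q + 1) * k : ℚ) ≤ (q * m : ℚ) := by push_cast at h ⊢; linarith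
    exact_mod_cast this
  have hm1 : 1 ≤ m := by
    by_contra h
    push_neg at h
    interval_cases m
    simp at fact1
    omega
  -- fact 2 : qm < (2q+1)k + q
  have fact2 : q * m < (2 * q + 1) * k + q := by
    by_contra h
    push_neg at h
    have hq' : ((2 * q + 1 : ℚ)) * k ≤ q * ((m : ℚ) - 1) := by
      have : (((2 * q + 1) * k + q : ℕ) : ℚ) ≤ ((q * m : ℕ) : ℚ) := by exact_mod_cast h
      push_cast at this
      linarith
    have hle : ((2 * q + 1 : ℚ)) * k / q ≤ ((m - 1 : ℕ) : ℚ) := by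
      rw [div_le_iff₀ hq0, Nat.cast_sub hm1]
      push_cast
      linarith [hq']
    have := Nat.ceil_le.mpr hle
    omega
  -- fact 3 : 2k + 1 ≤ m
  have fact3 : 2 * k + 1 ≤ m := by
    by_contra h
    push_neg at h
    have h' : m ≤ 2 * k := by omega
    have := Nat.mul_le_mul_left q h'
    have hr1 : (2 * q + 1) * k = 2 * (q * k) + k := by ring
    have hr2 : q * (2 * k) = 2 * (q * k) := by ring
    omega
  have hm0 : 0 < m := by omega
  set E : ℕ := q * m - (2 * q + 1) * k with hE
  have hEq : (2 * q + 1) * k + E = q * m := by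
    have hr1 : (2 * q + 1) * k = 2 * (q * k) + k := by ring
    omega
  have hElt : E < q := by
    have hr1 : (2 * q + 1) * k = 2 * (q * k) + k := by ring
    omega
  -- the color of the a-th vertex in the blob of cycle vertex i
  set s : ℕ → ℕ := fun i => i * k + min i E with hs
  set f : Fin (2 * q + 1) × Fin k → Fin m :=
    fun x => ⟨(s x.1.val + x.2.val) % m, Nat.mod_lt _ hm0⟩ with hf
  -- two naturals below m with the first < k ≤ second are distinct mod m
  have neq : ∀ u v : ℕ, u < k → k ≤ v → v < m → u % m ≠ v % m := by
    intro u v hu hv hvm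
    rw [Nat.mod_eq_of_lt (by omega), Nat.mod_eq_of_lt hvm]
    omega
  -- forward edges
  have main : ∀ x y : Fin (2 * q + 1) × Fin k,
      (y.1.val = x.1.val + 1 ∨ (x.1.val = 2 * q ∧ y.1.val = 0)) → f x ≠ f y := by
    rintro ⟨i, a⟩ ⟨j, b⟩ hadj hEqf
    have ha := a.isLt
    have hb := b.isLt
    have hvals : (s i.val + a.val) % m = (s j.val + b.val) % m := by
      have := congrArg Fin.val hEqf
      simpa [hf] using this
    have hadj' : j.val = i.val + 1 ∨ (i.val = 2 * q ∧ j.val = 0) := hadj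
    rcases hadj' with hfwd | ⟨hi2q, hj0⟩
    · -- j = i + 1
      obtain ⟨δ, hδ1, hδ2⟩ : ∃ δ, δ ≤ 1 ∧ s j.val = s i.val + (k + δ) := by
        refine ⟨min (i.val + 1) E - min i.val E, by omega, ?_⟩
        simp only [hs, hfwd]
        have hr : (i.val + 1) * k = i.val * k + k := by ring
        omega
      rw [hδ2] at hvals
      have hmod : a.val % m = (k + δ + b.val) % m := by
        have h1 : s i.val + (k + δ) + b.val = s i.val + (k + δ + b.val) := by ring
        rw [h1] at hvals
        exact Nat.ModEq.add_left_cancel' (s i.val) hvals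
      exact neq a.val (k + δ + b.val) ha (by omega) (by omega) hmod
    · -- wrap-around edge
      have hsi : s i.val = 2 * q * k + E := by
        simp only [hs, hi2q]
        omega
      have hsj : s j.val = 0 := by simp [hs, hj0]
      have hqm : s i.val + k = q * m := by
        rw [hsi]
        have hr : (2 * q + 1) * k = 2 * q * k + k := by ring
        omega
      have hvals' : (s i.val + a.val + k) % m = (b.val + k) % m := by
        rw [hsj, Nat.zero_add] at hvals
        exact Nat.ModEq.add_right k hvals
      have hl : s i.val + a.val + k = a.val + q * m := by omega
      rw [hl, Nat.add_mul_mod_self_right] at hvals'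
      exact neq a.val (b.val + k) ha (by omega) (by omega) hvals'
  refine ⟨Coloring.mk f ?_⟩
  intro x y hadj
  rw [blowup_adj] at hadj
  obtain ⟨hne, hor⟩ := hadj
  rcases hor with hfst | hcyc
  · -- same blob
    intro hEqf
    apply hne
    have hvals : (s x.1.val + x.2.val) % m = (s y.1.val + y.2.val) % m := by
      have := congrArg Fin.val hEqf
      simpa [hf] using this
    rw [hfst] at hvals
    have := Nat.ModEq.add_left_cancel' (s y.1.val) hvals
    have hx2 := x.2.isLt
    have hy2 := y.2.isLt
    have : x.2.val = y.2.val := by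
      have h1 := this
      rw [Nat.ModEq, Nat.mod_eq_of_lt (by omega), Nat.mod_eq_of_lt (by omega)] at h1
      exact h1
    exact Prod.ext hfst (Fin.ext this)
  · rw [cycle_adj_nat hq] at hcyc
    rcases hcyc with h | h
    · exact main x y h
    · exact (main y x h).symm

lemma blowup_lower {q k c : ℕ} (hq : 2 ≤ q)
    (hc : (cliqueBlowupPow (cycleGraph (2 * q + 1)) k).Colorable c) :
    (2 * q + 1) * k ≤ q * c := by
  classical
  obtain ⟨C⟩ := hc
  have hcard : (Finset.univ : Finset (Fin (2 * q + 1) × Fin k)).card = (2 * q + 1) * k := by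
    simp
  have hfiber : ∀ b ∈ (Finset.univ : Finset (Fin c)),
      (Finset.filter (fun a => C a = b) Finset.univ).card ≤ q := by
    intro b _
    set F := Finset.filter (fun a => C a = b)
      (Finset.univ : Finset (Fin (2 * q + 1) × Fin k)) with hF
    have hinj : Set.InjOn Prod.fst (↑F : Set (Fin (2 * q + 1) × Fin k)) := by
      intro x hx y hy hxy
      by_contra hne
      have hadj : (cliqueBlowupPow (cycleGraph (2 * q + 1)) k).Adj x y := by
        rw [blowup_adj]; exact ⟨hne, Or.inl hxy⟩
      simp only [hF, Finset.coe_filter, Set.mem_setOf_eq] at hx hy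
      exact C.valid hadj (hx.2.trans hy.2.symm)
    have hcardF : F.card = (F.image Prod.fst).card :=
      (Finset.card_image_of_injOn hinj).symm
    rw [hcardF]
    apply indep_card_le hq
    intro i hi j hj hadj
    rw [Finset.mem_image] at hi hj
    obtain ⟨x, hx, rfl⟩ := hi
    obtain ⟨y, hy, rfl⟩ := hj
    have hne : x ≠ y := fun h => (cycleGraph (2 * q + 1)).loopless.irrefl _ (h ▸ hadj)
    have hadj' : (cliqueBlowupPow (cycleGraph (2 * q + 1)) k).Adj x y := by
      rw [blowup_adj]; exact ⟨hne, Or.inr hadj⟩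
    simp only [hF, Finset.mem_filter] at hx hy
    exact C.valid hadj' (hx.2.trans hy.2.symm)
  have := Finset.card_le_mul_card_image_of_maps_to
    (f := fun a => C a) (t := (Finset.univ : Finset (Fin c)))
    (fun a _ => Finset.mem_univ _) q hfiber
  rw [hcard] at this
  simpa [mul_comm] using this

lemma blowup_chromatic {q k : ℕ} (hq : 2 ≤ q) (hk : 1 ≤ k) :
    (cliqueBlowupPow (cycleGraph (2 * q + 1)) k).chromaticNumber =
      ((⌈((2 * q + 1 : ℚ)) * k / q⌉₊ : ℕ) : ℕ∞) := by
  apply le_antisymm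
  · exact (blowup_colorable hq hk).chromaticNumber_le
  · rw [chromaticNumber_eq_biInf]
    refine le_iInf₂ fun c hc => ?_
    rw [Nat.cast_le]
    have hle := blowup_lower hq hc
    rw [Nat.ceil_le]
    have hq0 : (0 : ℚ) < q := by positivity
    rw [div_le_iff₀ hq0]
    have : (((2 * q + 1) * k : ℕ) : ℚ) ≤ ((q * c : ℕ) : ℚ) := by exact_mod_cast hle
    push_cast at this
    linarith

/-- For integers `q ≥ 2` and `k ≥ 1`, the `k`-clique blowup `C^k` of the cycle
`C = C_{2q+1}` satisfies `ω(C^k) = 2k` and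
`χ(C^k) = ⌈((2q+1)/(2q))·ω(C^k)⌉ = ⌈(2q+1)k/q⌉`. -/
theorem chromatic_number_blowup_odd_cycle (q k : ℕ) (hq : 2 ≤ q) (hk : 1 ≤ k) :
    (cliqueBlowupPow (cycleGraph (2 * q + 1)) k).cliqueNum = 2 * k ∧
    (cliqueBlowupPow (cycleGraph (2 * q + 1)) k).chromaticNumber =
      ((⌈((2 * q + 1 : ℚ)) / (2 * q) *
        ((cliqueBlowupPow (cycleGraph (2 * q + 1)) k).cliqueNum : ℚ)⌉₊ : ℕ) : ℕ∞) ∧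
    (cliqueBlowupPow (cycleGraph (2 * q + 1)) k).chromaticNumber =
      ((⌈((2 * q + 1 : ℚ)) * k / q⌉₊ : ℕ) : ℕ∞) := by
  have hω := cliqueNum_eq hq hk
  have hχ := blowup_chromatic hq hk
  refine ⟨hω, ?_, hχ⟩
  rw [hω, hχ]
  congr 2
  have hq0 : (q : ℚ) ≠ 0 := by positivity
  push_cast
  field_simp
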